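/- Let q ≥ 5 and let t(q) denote the smallest size of an almost complete subset of a nondegenerate conic C in PG(2,q). If ξ ≥ 1 is real and w is an integer with w < (q+3)/2 satisfying ∏_{i=1}^{w} (1 - (i-2)/(q+1-i)) ≤ ξ/q^2, then t(q) ≤ w + 1 + ξ. -/

import Mathlib

open scoped Classical

noncomputable section

/-- The projective plane `PG(2,q)` over a field `F` (with `q = #F`). -/
abbrev PG2 (F : Type) [Field F] : Type := Projectivization F (Fin 3 → F)

variable {F : Type} [Field F] [Fintype F]

/-- Three points of `PG(2,q)` are collinear if they lie in a common
projective line, i.e. a common 2-dimensional linear subspace. -/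
def Collinear3 (a b c : PG2 F) : Prop :=
  ∃ W : Submodule F (Fin 3 → F), Module.finrank F W = 2 ∧
    a.rep ∈ W ∧ b.rep ∈ W ∧ c.rep ∈ W

/-- A (projective) line of `PG(2,q)`: the point set of a 2-dimensional linear subspace. -/
def IsLine (L : Set (PG2 F)) : Prop :=
  ∃ W : Submodule F (Fin 3 → F), Module.finrank F W = 2 ∧ L = {p : PG2 F | p.rep ∈ W}

/-- An arc: no three distinct points collinear. -/
def IsArc (C : Set (PG2 F)) : Prop :=
  ∀ a ∈ C, ∀ b ∈ C, ∀ c ∈ C, a ≠ b → b ≠ c → a ≠ c → ¬ Collinear3 a b c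

/-- A nondegenerate conic: the zero locus of a quadratic form which is
a `(q+1)`-arc. -/
def IsConic (C : Set (PG2 F)) : Prop :=
  (∃ Q : QuadraticForm F (Fin 3 → F), C = {p : PG2 F | Q p.rep = 0}) ∧
  IsArc C ∧ C.ncard = Fintype.card F + 1

/-- A tangent of `C`: a line meeting `C` in exactly one point. -/
def IsTangent (C L : Set (PG2 F)) : Prop := IsLine L ∧ (L ∩ C).ncard = 1

/-- A bisecant of `C`: a line meeting `C` in exactly two points. -/
def IsBisecant (C L : Set (PG2 F)) : Prop := IsLine L ∧ (L ∩ C).ncard = 2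

/-- A point `P` is covered by a point set `K` if `P` is collinear with two
distinct points of `K` (i.e. `P` lies on a bisecant of `K`). -/
def Covered (K : Set (PG2 F)) (P : PG2 F) : Prop :=
  ∃ a ∈ K, ∃ b ∈ K, a ≠ b ∧ Collinear3 a b P

/-- `O` is a nucleus of `C` if every tangent of `C` passes through `O`. -/
def IsNucleus (C : Set (PG2 F)) (O : PG2 F) : Prop :=
  ∀ L : Set (PG2 F), IsTangent C L → O ∈ L

/-- The point set `M_q`: all points off `C` (and also off the nucleus when `q` is even). -/
def Mset (C : Set (PG2 F)) : Set (PG2 F) :=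
  if Even (Fintype.card F) then (Set.univ \ C) \ {O : PG2 F | IsNucleus C O}
  else Set.univ \ C

/-- An almost complete subset of the conic `C`: a proper subset of `C`
covering every point of `M_q`. -/
def IsACSubset (C S : Set (PG2 F)) : Prop :=
  S ⊂ C ∧ ∀ P ∈ Mset C, Covered S P

/-- The smallest size of an almost complete subset of `C`. -/
noncomputable def tAC (C : Set (PG2 F)) : ℕ :=
  sInf {n : ℕ | ∃ S : Set (PG2 F), IsACSubset C S ∧ S.ncard = n}


set_option linter.unusedSectionVars false
set_option maxHeartbeats 1000000

namespace ACAux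

open Projectivization Module Submodule

instance : Finite (PG2 F) := Quotient.finite _

noncomputable instance : Fintype (PG2 F) := Fintype.ofFinite _

lemma mk_eq_mk_of_smul {v w : Fin 3 → F} (hv : v ≠ 0) (hw : w ≠ 0) {c d : F} (hc : c ≠ 0)
    (h : c • v = d • w) : Projectivization.mk F v hv = Projectivization.mk F w hw := by
  rw [Projectivization.mk_eq_mk_iff']
  exact ⟨c⁻¹ * d, by rw [mul_smul, ← h, inv_smul_smul₀ hc]⟩

/-- normalization target -/
private def normTarget (p : PG2 F) : (F × F) ⊕ (F ⊕ Unit) :=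
  if p.rep 2 ≠ 0 then Sum.inl ((p.rep 2)⁻¹ * p.rep 0, (p.rep 2)⁻¹ * p.rep 1)
  else if p.rep 1 ≠ 0 then Sum.inr (Sum.inl ((p.rep 1)⁻¹ * p.rep 0))
  else Sum.inr (Sum.inr ())

lemma normTarget_injective : Function.Injective (normTarget (F := F)) := by
  intro p p' h
  have hv0 : p.rep ≠ 0 := p.rep_nonzero
  have hw0 : p'.rep ≠ 0 := p'.rep_nonzero
  have key : ∀ {c d : F}, c ≠ 0 → d ≠ 0 → c • p.rep = d • p'.rep → p = p' := by
    intro c d hc hd hcd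
    rw [← Projectivization.mk_rep p, ← Projectivization.mk_rep p']
    exact mk_eq_mk_of_smul hv0 hw0 hc hcd
  unfold normTarget at h
  split_ifs at h
  all_goals simp only [Sum.inl.injEq, Sum.inr.injEq, Prod.mk.injEq, reduceCtorEq] at h
  · rename_i h2 h2'
    obtain ⟨h0, h1⟩ := h
    refine key (c := (p.rep 2)⁻¹) (d := (p'.rep 2)⁻¹) (inv_ne_zero h2) (inv_ne_zero h2') ?_
    funext i
    fin_cases i
    · simpa using h0
    · simpa using h1
    · simp [inv_mul_cancel₀ h2, inv_mul_cancel₀ h2']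
  · rename_i h2 h1 h2' h1'
    push_neg at h2 h2'
    refine key (c := (p.rep 1)⁻¹) (d := (p'.rep 1)⁻¹) (inv_ne_zero h1) (inv_ne_zero h1') ?_
    funext i
    fin_cases i
    · simpa using h
    · simp [inv_mul_cancel₀ h1, inv_mul_cancel₀ h1']
    · simp [h2, h2']
  · rename_i h2 h1 h2' h1'
    push_neg at h2 h2' h1 h1'
    have hvz : p.rep 0 ≠ 0 := by
      intro h0
      apply hv0
      funext i; fin_cases i <;> simp [h0, h1, h2]
    have hwz : p'.rep 0 ≠ 0 := by
      intro h0
      apply hw0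
      funext i; fin_cases i <;> simp [h0, h1', h2']
    refine key (c := (p.rep 0)⁻¹) (d := (p'.rep 0)⁻¹) (inv_ne_zero hvz) (inv_ne_zero hwz) ?_
    funext i
    fin_cases i
    · simp [inv_mul_cancel₀ hvz, inv_mul_cancel₀ hwz]
    · simp [h1, h1']
    · simp [h2, h2']

lemma card_PG2_le : Fintype.card (PG2 F) ≤ (Fintype.card F)^2 + Fintype.card F + 1 := by
  have := Fintype.card_le_of_injective _ (normTarget_injective (F := F))
  simpa [Fintype.card_prod, Fintype.card_sum, sq, add_assoc] using this



open Projectivization Module Submodule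





lemma rep_indep {a b : PG2 F} (h : a ≠ b) :
    LinearIndependent F ![a.rep, b.rep] := by
  have := (Projectivization.independent_pair_iff_ne a b).2 h
  rw [Projectivization.independent_iff] at this
  have e : ![a.rep, b.rep] = Projectivization.rep ∘ ![a, b] := by
    funext i
    fin_cases i <;> simp
  rw [e]
  exact this

lemma finrank_span_pair {a b : Fin 3 → F} (h : LinearIndependent F ![a, b]) :
    Module.finrank F (span F {a, b}) = 2 := by
  have : ({a, b} : Set (Fin 3 → F)) = Set.range ![a, b] := by
    simp [Matrix.range_cons, Matrix.range_empty, Set.insert_comm]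
    ext x; simp [or_comm]
  rw [this, finrank_span_eq_card h]
  simp

lemma W_eq_span {a b : PG2 F} (h : a ≠ b) {W : Submodule F (Fin 3 → F)}
    (hW : Module.finrank F W = 2) (ha : a.rep ∈ W) (hb : b.rep ∈ W) :
    W = span F {a.rep, b.rep} := by
  have hle : span F {a.rep, b.rep} ≤ W := by
    rw [span_le]; rintro x (rfl | rfl); exacts [ha, hb]
  exact (Submodule.eq_of_le_of_finrank_le hle (by
    rw [hW, finrank_span_pair (rep_indep h)])).symm

lemma collinear_merge {A P B B' : PG2 F} (hAP : A ≠ P)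
    (h1 : Collinear3 B A P) (h2 : Collinear3 B' A P) : Collinear3 B B' P := by
  obtain ⟨W1, hr1, hB1, hA1, hP1⟩ := h1
  obtain ⟨W2, hr2, hB2, hA2, hP2⟩ := h2
  have e1 := W_eq_span hAP hr1 hA1 hP1
  have e2 := W_eq_span hAP hr2 hA2 hP2
  exact ⟨W1, hr1, hB1, e1 ▸ e2 ▸ hB2, hP1⟩

lemma rep_mk_mem_span {v : Fin 3 → F} (hv : v ≠ 0) {W : Submodule F (Fin 3 → F)}
    (hvW : v ∈ W) : (Projectivization.mk F v hv).rep ∈ W := by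
  obtain ⟨c, hc⟩ := Projectivization.exists_smul_eq_mk_rep F v hv
  rw [← hc]
  exact W.smul_mem _ hvW

end ACAux

namespace ACAux

open Projectivization Module Submodule QuadraticMap

/-- `B` is a tangential point of `C` as seen from `P`: no other point of `C` is
collinear with `B` and `P`. -/
def Tangential (C : Set (PG2 F)) (P B : PG2 F) : Prop :=
  ∀ A ∈ C, A ≠ B → ¬ Collinear3 B A P

lemma map_add_eq (Q : QuadraticForm F (Fin 3 → F)) (x y : Fin 3 → F) :
    Q (x + y) = Q x + Q y + polar Q x y := by
  rw [polar]; ring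

lemma Q_rep_mk (Q : QuadraticForm F (Fin 3 → F)) {v : Fin 3 → F} (hv : v ≠ 0) (h : Q v = 0) :
    Q ((Projectivization.mk F v hv).rep) = 0 := by
  obtain ⟨a, ha⟩ := exists_smul_eq_mk_rep F v hv
  rw [← ha, Units.smul_def, QuadraticMap.map_smul, h]
  simp

lemma pair_zero {a b : PG2 F} (h : a ≠ b) {c d : F} (hcd : c • a.rep + d • b.rep = 0) :
    c = 0 ∧ d = 0 :=
  (rep_indep h).eq_zero_of_pair hcd

lemma tangential_polar {Q : QuadraticForm F (Fin 3 → F)} {C : Set (PG2 F)}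
    (hCQ : C = {p : PG2 F | Q p.rep = 0}) {P B : PG2 F} (hB : B ∈ C) (hP : P ∉ C)
    (ht : Tangential C P B) : polar Q B.rep P.rep = 0 := by
  by_contra hβ
  have hQb : Q B.rep = 0 := by rw [hCQ] at hB; exact hB
  have hQp : Q P.rep ≠ 0 := by rw [hCQ] at hP; exact hP
  have hBP : B ≠ P := fun h => hP (h ▸ hB)
  set β := polar Q B.rep P.rep with hβdef
  set s : F := -β / Q P.rep with hs
  have hs0 : s ≠ 0 := by
    rw [hs, div_ne_zero_iff]
    exact ⟨neg_ne_zero.mpr hβ, hQp⟩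
  set v := B.rep + s • P.rep with hvdef
  have hv0 : v ≠ 0 := by
    intro h0
    have h1 : (1 : F) • B.rep + s • P.rep = 0 := by simpa [hvdef] using h0
    exact one_ne_zero (pair_zero hBP h1).1
  have hsQ : s * Q P.rep = -β := by
    rw [hs]; field_simp
  have hQv : Q v = 0 := by
    rw [hvdef, map_add_eq, hQb, QuadraticMap.map_smul, polar_smul_right, smul_eq_mul,
      smul_eq_mul, mul_assoc, hsQ]
    ring
  have hACmem : Projectivization.mk F v hv0 ∈ C := by
    rw [hCQ]; exact Q_rep_mk Q hv0 hQv
  have hAB : Projectivization.mk F v hv0 ≠ B := by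
    intro h
    rw [← Projectivization.mk_rep B, Projectivization.mk_eq_mk_iff'] at h
    obtain ⟨a, ha⟩ := h
    have h2 : (1 - a) • B.rep + s • P.rep = v - a • B.rep := by rw [hvdef]; module
    rw [ha, sub_self] at h2
    exact hs0 (pair_zero hBP h2).2
  refine ht _ hACmem hAB ?_
  refine ⟨span F {B.rep, P.rep}, finrank_span_pair (rep_indep hBP),
    subset_span (by simp), ?_, subset_span (by simp)⟩
  exact rep_mk_mem_span hv0 (add_mem (subset_span (by simp))
    (smul_mem _ _ (subset_span (by simp))))

lemma radical_conic_point {Q : QuadraticForm F (Fin 3 → F)} {C : Set (PG2 F)}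
    (hCQ : C = {p : PG2 F | Q p.rep = 0}) (hArc : IsArc C) (hcard : 1 < C.ncard)
    {B : PG2 F} (hB : B ∈ C) (hrad : ∀ x, polar Q B.rep x = 0) : False := by
  obtain ⟨X, hX, hXB⟩ := Set.exists_ne_of_one_lt_ncard hcard B
  have hQb : Q B.rep = 0 := by rw [hCQ] at hB; exact hB
  have hQx : Q X.rep = 0 := by rw [hCQ] at hX; exact hX
  set v := X.rep + B.rep with hvdef
  have hv0 : v ≠ 0 := by
    intro h0
    have h1 : (1 : F) • X.rep + (1 : F) • B.rep = 0 := by simpa [hvdef] using h0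
    exact one_ne_zero (pair_zero hXB h1).1
  have hQv : Q v = 0 := by
    rw [hvdef, map_add_eq, hQb, hQx, polar_comm, hrad]; ring
  set M := Projectivization.mk F v hv0 with hMdef
  have hMC : M ∈ C := by rw [hCQ]; exact Q_rep_mk Q hv0 hQv
  have hXM : X ≠ M := by
    intro h
    rw [hMdef, ← Projectivization.mk_rep X, Projectivization.mk_eq_mk_iff'] at h
    obtain ⟨a, ha⟩ := h
    have h2 : (a - 1) • X.rep + a • B.rep = a • v - X.rep := by rw [hvdef]; module
    rw [ha, sub_self] at h2
    have h3 := pair_zero hXB h2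
    rw [h3.2] at h3
    simpa using h3.1
  have hMB : M ≠ B := by
    intro h
    rw [hMdef, ← Projectivization.mk_rep B, Projectivization.mk_eq_mk_iff'] at h
    obtain ⟨a, ha⟩ := h
    have h2 : (1 : F) • X.rep + (1 - a) • B.rep = v - a • B.rep := by rw [hvdef]; module
    rw [ha, sub_self] at h2
    exact one_ne_zero (pair_zero hXB h2).1
  refine hArc X hX M hMC B hB hXM hMB hXB ?_
  refine ⟨span F {X.rep, B.rep}, finrank_span_pair (rep_indep hXB),
    subset_span (by simp), ?_, subset_span (by simp)⟩
  exact rep_mk_mem_span hv0 (add_mem (subset_span (by simp)) (subset_span (by simp)))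

lemma ker_rank_two (ψ : (Fin 3 → F) →ₗ[F] F) {x₀ : Fin 3 → F} (hx : ψ x₀ ≠ 0) :
    Module.finrank F (LinearMap.ker ψ) = 2 := by
  have hsur : Function.Surjective ψ := fun c =>
    ⟨(c / ψ x₀) • x₀, by rw [_root_.map_smul, smul_eq_mul, div_mul_cancel₀ _ hx]⟩
  have hr := LinearMap.finrank_range_add_finrank_ker ψ
  rw [LinearMap.range_eq_top.mpr hsur] at hr
  have h3 : Module.finrank F (Fin 3 → F) = 3 := by simp
  have h1 : Module.finrank F (⊤ : Submodule F F) = 1 := by simp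
  omega

end ACAux

namespace ACAux

open Projectivization Module Submodule QuadraticMap

lemma Mset_not_mem_C {C : Set (PG2 F)} {P : PG2 F} (hP : P ∈ Mset C) : P ∉ C := by
  unfold Mset at hP
  split_ifs at hP
  · exact hP.1.2
  · exact hP.2

lemma Mset_not_nucleus {C : Set (PG2 F)} {P : PG2 F} (heven : Even (Fintype.card F))
    (hP : P ∈ Mset C) : ¬ IsNucleus C P := by
  unfold Mset at hP
  rw [if_pos heven] at hP
  exact hP.2

lemma tangential_card_le {C : Set (PG2 F)} (hC : IsConic C) {P : PG2 F} (hP : P ∈ Mset C)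
    (T : Finset (PG2 F)) (hT : ∀ B ∈ T, B ∈ C ∧ Tangential C P B) : T.card ≤ 2 := by
  obtain ⟨⟨Q, hCQ⟩, hArc, hcard⟩ := hC
  have hq1 : 1 < C.ncard := by rw [hcard]; have := Fintype.card_pos (α := F); omega
  have hPC : P ∉ C := Mset_not_mem_C hP
  have hQp : Q P.rep ≠ 0 := by rw [hCQ] at hPC; exact hPC
  by_cases hφ : ∀ x, polar Q P.rep x = 0
  · -- `P` is in the radical: then `q` is even and `P` is a nucleus, contradiction.
    exfalso
    have h20 : (2 : F) = 0 := by
      have h2 := hφ P.rep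
      rw [polar_self] at h2
      have h2' : (2 : F) * Q P.rep = 0 := by
        rw [two_mul]; rw [two_nsmul] at h2; exact h2
      rcases mul_eq_zero.mp h2' with h | h
      · exact h
      · exact absurd h hQp
    have hchar : ringChar F = 2 :=
      ((Nat.dvd_prime Nat.prime_two).mp (ringChar.dvd (by exact_mod_cast h20))).resolve_left
        CharP.ringChar_ne_one
    have heven : Even (Fintype.card F) := by
      haveI hch : CharP F 2 := hchar ▸ ringChar.charP F
      obtain ⟨n, hp, hc⟩ := FiniteField.card F 2
      rw [hc]
      exact Nat.even_pow.mpr ⟨even_iff_two_dvd.mpr dvd_rfl, n.2.ne'⟩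
    apply Mset_not_nucleus heven hP
    intro L hL
    obtain ⟨⟨W, hW2, rfl⟩, hL1⟩ := hL
    obtain ⟨B, hBL⟩ := Set.ncard_eq_one.mp hL1
    have hBmem : B ∈ {p : PG2 F | p.rep ∈ W} ∩ C := by rw [hBL]; exact rfl
    have hBW : B.rep ∈ W := hBmem.1
    have hBC : B ∈ C := hBmem.2
    have hQb : Q B.rep = 0 := by rw [hCQ] at hBC; exact hBC
    by_cases hψr : ∀ x, polar Q B.rep x = 0
    · exact absurd (radical_conic_point hCQ hArc hq1 hBC hψr) id
    · push_neg at hψr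
      obtain ⟨x₀, hx₀⟩ := hψr
      set ψ : (Fin 3 → F) →ₗ[F] F := (QuadraticMap.polarBilin Q) B.rep with hψdef
      have hψap : ∀ x, ψ x = polar Q B.rep x := fun x => rfl
      have hker : W ≤ LinearMap.ker ψ := by
        intro u huW
        rw [LinearMap.mem_ker, hψap]
        by_contra hβ
        have hbu : ∀ c : F, u ≠ c • B.rep := by
          intro c hc
          apply hβ
          rw [hc, polar_smul_right, smul_eq_mul]
          have hpb : polar Q B.rep B.rep = 0 := by
            rw [polar_self, hQb]; simp
          rw [hpb, mul_zero]
        set t := -(Q u) / polar Q B.rep u with ht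
        set z := u + t • B.rep with hzdef
        have hz0 : z ≠ 0 := by
          intro h0
          rw [hzdef] at h0
          exact hbu (-t) (by rw [neg_smul]; exact eq_neg_of_add_eq_zero_left h0)
        have htβ : t * polar Q B.rep u = -(Q u) := by
          rw [ht]; field_simp
        have hQz : Q z = 0 := by
          rw [hzdef, map_add_eq, QuadraticMap.map_smul, hQb, polar_smul_right,
            polar_comm (⇑Q) u, smul_eq_mul, smul_eq_mul, htβ]
          ring
        have hzmem : Projectivization.mk F z hz0 ∈ {p : PG2 F | p.rep ∈ W} ∩ C := by
          refine ⟨rep_mk_mem_span hz0 ?_, by rw [hCQ]; exact Q_rep_mk Q hz0 hQz⟩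
          rw [hzdef]
          exact W.add_mem huW (W.smul_mem _ hBW)
        rw [hBL, Set.mem_singleton_iff, ← Projectivization.mk_rep B,
          Projectivization.mk_eq_mk_iff'] at hzmem
        obtain ⟨a, ha⟩ := hzmem
        exact hbu (a - t) (by rw [sub_smul, ha, hzdef]; abel)
      have hkr : Module.finrank F (LinearMap.ker ψ) = 2 :=
        ker_rank_two ψ (x₀ := x₀) (by rw [hψap]; exact hx₀)
      have hWk : W = LinearMap.ker ψ :=
        Submodule.eq_of_le_of_finrank_le hker (by rw [hkr, hW2])
      show P ∈ {p : PG2 F | p.rep ∈ W}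
      have hpk : ψ P.rep = 0 := by rw [hψap, polar_comm]; exact hφ B.rep
      simp only [Set.mem_setOf_eq, hWk]
      exact LinearMap.mem_ker.mpr hpk
  · -- the polar line of `P`: all tangential points lie on it
    push_neg at hφ
    obtain ⟨x₀, hx₀⟩ := hφ
    set φ : (Fin 3 → F) →ₗ[F] F := (QuadraticMap.polarBilin Q) P.rep with hφdef
    have hφap : ∀ x, φ x = polar Q P.rep x := fun x => rfl
    have hkr : Module.finrank F (LinearMap.ker φ) = 2 :=
      ker_rank_two φ (x₀ := x₀) (by rw [hφap]; exact hx₀)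
    have hT' : ∀ B ∈ T, B.rep ∈ LinearMap.ker φ := by
      intro B hB
      have h := tangential_polar hCQ (hT B hB).1 hPC (hT B hB).2
      rw [LinearMap.mem_ker, hφap, polar_comm]
      exact h
    by_contra hc
    push_neg at hc
    obtain ⟨x, hx⟩ := Finset.card_pos.mp (by omega : 0 < T.card)
    have h2 : 0 < (T.erase x).card := by rw [Finset.card_erase_of_mem hx]; omega
    obtain ⟨y, hy⟩ := Finset.card_pos.mp h2
    have h3 : 0 < ((T.erase x).erase y).card := by
      rw [Finset.card_erase_of_mem hy, Finset.card_erase_of_mem hx]; omega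
    obtain ⟨z, hz⟩ := Finset.card_pos.mp h3
    have hzy : z ≠ y := (Finset.mem_erase.mp hz).1
    have hzx : z ≠ x := (Finset.mem_erase.mp (Finset.mem_erase.mp hz).2).1
    have hzT : z ∈ T := (Finset.mem_erase.mp (Finset.mem_erase.mp hz).2).2
    have hyx : y ≠ x := (Finset.mem_erase.mp hy).1
    have hyT : y ∈ T := (Finset.mem_erase.mp hy).2
    exact hArc x (hT x hx).1 y (hT y hyT).1 z (hT z hzT).1 hyx.symm hzy.symm hzx.symm
      ⟨LinearMap.ker φ, hkr, hT' x hx, hT' y hyT, hT' z hzT⟩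

end ACAux

namespace ACAux

open Projectivization Module Submodule QuadraticMap

lemma Covered_mono {K K' : Set (PG2 F)} (h : K ⊆ K') {P : PG2 F} (hc : Covered K P) :
    Covered K' P := by
  obtain ⟨a, ha, b, hb, hab, hcol⟩ := hc
  exact ⟨a, h ha, b, h hb, hab, hcol⟩

lemma good_count {C : Set (PG2 F)} (hC : IsConic C) {P : PG2 F} (hP : P ∈ Mset C)
    (K : Finset (PG2 F)) (hKC : ↑K ⊆ C) (hunc : ¬ Covered (↑K) P) :
    K.card - 2 ≤
      ((C.toFinset \ K).filter (fun A => Covered (insert A (↑K : Set (PG2 F))) P)).card := by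
  classical
  have hPC : P ∉ C := Mset_not_mem_C hP
  set T := K.filter (fun B => Tangential C P B) with hTdef
  have hT2 : T.card ≤ 2 := by
    refine tangential_card_le hC hP T ?_
    intro B hB
    rw [hTdef, Finset.mem_filter] at hB
    exact ⟨hKC hB.1, hB.2⟩
  have hpart : ∀ B ∈ K \ T, ∃ A, A ∈ C ∧ A ≠ B ∧ Collinear3 B A P := by
    intro B hB
    rw [Finset.mem_sdiff] at hB
    have hnt : ¬ Tangential C P B := fun ht => hB.2 (Finset.mem_filter.mpr ⟨hB.1, ht⟩)
    unfold Tangential at hnt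
    push_neg at hnt
    exact hnt
  set pa : PG2 F → PG2 F := fun B =>
    if h : ∃ A, A ∈ C ∧ A ≠ B ∧ Collinear3 B A P then h.choose else B with hpadef
  have hspec : ∀ B ∈ K \ T, pa B ∈ C ∧ pa B ≠ B ∧ Collinear3 B (pa B) P := by
    intro B hB
    have hex := hpart B hB
    simp only [hpadef, dif_pos hex]
    exact hex.choose_spec
  have hmaps : ∀ B ∈ K \ T,
      pa B ∈ (C.toFinset \ K).filter (fun A => Covered (insert A (↑K : Set (PG2 F))) P) := by
    intro B hB
    obtain ⟨hAC, hAB, hcol⟩ := hspec B hB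
    have hBK : B ∈ K := (Finset.mem_sdiff.mp hB).1
    have hAK : pa B ∉ K := by
      intro hAK
      exact hunc ⟨B, hBK, pa B, hAK, hAB.symm, hcol⟩
    refine Finset.mem_filter.mpr ⟨Finset.mem_sdiff.mpr ⟨Set.mem_toFinset.mpr hAC, hAK⟩, ?_⟩
    exact ⟨B, Set.mem_insert_of_mem _ hBK, pa B, Set.mem_insert _ _, hAB.symm, hcol⟩
  have hinj : Set.InjOn pa (K \ T : Finset (PG2 F)) := by
    intro B hB B' hB' heq
    by_contra hne
    obtain ⟨hAC, hAB, hcol⟩ := hspec B (by exact_mod_cast hB)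
    obtain ⟨hAC', hAB', hcol'⟩ := hspec B' (by exact_mod_cast hB')
    rw [heq] at hcol
    have hAP : pa B' ≠ P := fun h => hPC (h ▸ hAC')
    have hcc : Collinear3 B B' P := collinear_merge hAP hcol hcol'
    exact hunc ⟨B, (Finset.mem_sdiff.mp (by exact_mod_cast hB)).1, B',
      (Finset.mem_sdiff.mp (by exact_mod_cast hB')).1, hne, hcc⟩
  have hcard := Finset.card_le_card_of_injOn pa hmaps hinj
  have hTsub : T ⊆ K := Finset.filter_subset _ _
  rw [Finset.card_sdiff_of_subset hTsub] at hcard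
  omega

def uncovF (C : Set (PG2 F)) (K : Finset (PG2 F)) : Finset (PG2 F) :=
  (Mset C).toFinset.filter (fun P => ¬ Covered (↑K : Set (PG2 F)) P)

lemma uncovF_insert (C : Set (PG2 F)) (K : Finset (PG2 F)) (A : PG2 F) :
    uncovF C (insert A K) =
      (uncovF C K).filter (fun P => ¬ Covered (insert A (↑K : Set (PG2 F))) P) := by
  ext P
  simp only [uncovF, Finset.mem_filter, Finset.coe_insert, Set.mem_toFinset]
  constructor
  · rintro ⟨hM, hnc⟩
    exact ⟨⟨hM, fun hc => hnc (Covered_mono (Set.subset_insert _ _) hc)⟩, hnc⟩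
  · rintro ⟨⟨hM, _⟩, hnc⟩
    exact ⟨hM, hnc⟩

lemma greedy_step {C : Set (PG2 F)} (hC : IsConic C) {q : ℕ} (hq : Fintype.card F = q)
    (K : Finset (PG2 F)) (hKC : ↑K ⊆ C) (hKlt : K.card < q + 1) :
    ∃ A, A ∈ C ∧ A ∉ K ∧
      (uncovF C (insert A K)).card ≤ (uncovF C K).card ∧
      (K.card - 2) * (uncovF C K).card ≤
        (q + 1 - K.card) * ((uncovF C K).card - (uncovF C (insert A K)).card) := by
  classical
  have hCcard : C.toFinset.card = q + 1 := by
    rw [← Set.ncard_eq_toFinset_card', hC.2.2, hq]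
  have hKsub : K ⊆ C.toFinset := fun x hx => Set.mem_toFinset.mpr (hKC hx)
  set D := C.toFinset \ K with hDdef
  have hDcard : D.card = q + 1 - K.card := by
    rw [hDdef, Finset.card_sdiff_of_subset hKsub, hCcard]
  have hDne : D.Nonempty := by
    rw [← Finset.card_pos, hDcard]; omega
  set U := uncovF C K with hUdef
  have hlow : ∀ P ∈ U, K.card - 2 ≤
      (D.filter (fun A => Covered (insert A (↑K : Set (PG2 F))) P)).card := by
    intro P hPU
    rw [hUdef, uncovF, Finset.mem_filter, Set.mem_toFinset] at hPU
    exact good_count hC hPU.1 K hKC hPU.2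
  have htotal : (K.card - 2) * U.card ≤
      ∑ A ∈ D, (U.filter (fun P => Covered (insert A (↑K : Set (PG2 F))) P)).card := by
    have hswap : ∑ A ∈ D, (U.filter (fun P => Covered (insert A (↑K : Set (PG2 F))) P)).card
        = ∑ P ∈ U, (D.filter (fun A => Covered (insert A (↑K : Set (PG2 F))) P)).card := by
      simp_rw [Finset.card_filter]
      exact Finset.sum_comm
    rw [hswap]
    calc (K.card - 2) * U.card = ∑ _P ∈ U, (K.card - 2) := by
          rw [Finset.sum_const, smul_eq_mul, mul_comm]
      _ ≤ _ := Finset.sum_le_sum hlow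
  obtain ⟨A, hAD, hmax⟩ := D.exists_max_image
    (fun A => (U.filter (fun P => Covered (insert A (↑K : Set (PG2 F))) P)).card) hDne
  have hsum_le : ∑ A' ∈ D, (U.filter (fun P => Covered (insert A' (↑K : Set (PG2 F))) P)).card
      ≤ D.card * (U.filter (fun P => Covered (insert A (↑K : Set (PG2 F))) P)).card := by
    calc _ ≤ ∑ _A' ∈ D, (U.filter (fun P => Covered (insert A (↑K : Set (PG2 F))) P)).card :=
          Finset.sum_le_sum fun A' hA' => hmax A' hA'
      _ = _ := by rw [Finset.sum_const, smul_eq_mul]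
  have hAC : A ∈ C := Set.mem_toFinset.mp (Finset.mem_sdiff.mp hAD).1
  have hAK : A ∉ K := (Finset.mem_sdiff.mp hAD).2
  refine ⟨A, hAC, hAK, ?_, ?_⟩
  · rw [uncovF_insert]
    exact Finset.card_le_card (Finset.filter_subset _ _)
  · have hsplit := Finset.card_filter_add_card_filter_not
      (s := U) (p := fun P => Covered (insert A (↑K : Set (PG2 F))) P)
    rw [uncovF_insert, ← hUdef]
    have h1 : (K.card - 2) * U.card ≤
        D.card * (U.filter (fun P => Covered (insert A (↑K : Set (PG2 F))) P)).card :=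
      le_trans htotal hsum_le
    rw [hDcard] at h1
    have h2 : (U.filter (fun P => Covered (insert A (↑K : Set (PG2 F))) P)).card
        = U.card - (U.filter (fun P => ¬ Covered (insert A (↑K : Set (PG2 F))) P)).card := by
      omega
    rw [h2] at h1
    exact h1
end ACAux

namespace ACAux

open Projectivization Module Submodule QuadraticMap

lemma Mset_card_le {C : Set (PG2 F)} {q : ℕ} (hq : Fintype.card F = q)
    (hCcard : C.ncard = q + 1) : (Mset C).toFinset.card ≤ q ^ 2 := by
  classical
  have hsub : (Mset C).toFinset ⊆ Finset.univ \ C.toFinset := by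
    intro P hP
    rw [Finset.mem_sdiff]
    exact ⟨Finset.mem_univ _, fun hPC =>
      Mset_not_mem_C (Set.mem_toFinset.mp hP) (Set.mem_toFinset.mp hPC)⟩
  have h1 := Finset.card_le_card hsub
  rw [Finset.card_sdiff_of_subset (Finset.subset_univ _), Finset.card_univ] at h1
  have h2 : C.toFinset.card = q + 1 := by rw [← Set.ncard_eq_toFinset_card', hCcard]
  have h3 := card_PG2_le (F := F)
  rw [hq] at h3
  rw [h2] at h1
  have : q ^ 2 + q + 1 - (q + 1) = q ^ 2 := by omega
  omega

lemma trivial_AC {C : Set (PG2 F)} (hC : IsConic C) {q : ℕ} (hq : Fintype.card F = q)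
    (hq5 : 5 ≤ q) : ∃ S : Set (PG2 F), IsACSubset C S ∧ S.ncard = q := by
  classical
  have hCcard : C.ncard = q + 1 := by rw [hC.2.2, hq]
  obtain ⟨A, hA⟩ := Set.nonempty_of_ncard_ne_zero (by rw [hCcard]; omega)
  refine ⟨C \ {A}, ⟨⟨Set.diff_subset, fun hEq => (hEq hA).2 rfl⟩, ?_⟩, ?_⟩
  · -- covering
    intro P hP
    by_contra hunc
    set K : Finset (PG2 F) := C.toFinset.erase A with hKdef
    have hKco : (↑K : Set (PG2 F)) = C \ {A} := by
      rw [hKdef, Finset.coe_erase, Set.coe_toFinset]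
    have hKC : (↑K : Set (PG2 F)) ⊆ C := by rw [hKco]; exact Set.diff_subset
    have hunc' : ¬ Covered (↑K : Set (PG2 F)) P := by rw [hKco]; exact hunc
    have hgc := good_count hC hP K hKC hunc'
    have hcc : C.toFinset.card = q + 1 := by rw [← Set.ncard_eq_toFinset_card', hCcard]
    have hKcard : K.card = q := by
      rw [hKdef, Finset.card_erase_of_mem (Set.mem_toFinset.mpr hA), hcc]
      omega
    have hsd : C.toFinset \ K = {A} := Finset.sdiff_erase_self (Set.mem_toFinset.mpr hA)
    have hle : ((C.toFinset \ K).filter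
        (fun A' => Covered (insert A' (↑K : Set (PG2 F))) P)).card ≤ 1 := by
      calc _ ≤ (C.toFinset \ K).card := Finset.card_le_card (Finset.filter_subset _ _)
        _ = 1 := by rw [hsd, Finset.card_singleton]
    omega
  · rw [Set.ncard_diff_singleton_of_mem hA, hCcard]
    omega

lemma greedy {C : Set (PG2 F)} (hC : IsConic C) {q : ℕ} (hq : Fintype.card F = q)
    (hq5 : 5 ≤ q) {w : ℕ} (hwq : 2 * w < q + 3) :
    ∀ j, 1 ≤ j → j ≤ w + 1 → ∃ K : Finset (PG2 F), ↑K ⊆ C ∧ K.card = j ∧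
      ((uncovF C K).card : ℝ) ≤ (q : ℝ) ^ 2 *
        ∏ i ∈ Finset.Icc 1 (j - 1), (1 - ((i : ℝ) - 2) / ((q : ℝ) + 1 - i)) := by
  intro j hj1
  induction j, hj1 using Nat.le_induction with
  | base =>
    intro _
    have hCcard : C.ncard = q + 1 := by rw [hC.2.2, hq]
    obtain ⟨A, hA⟩ := Set.nonempty_of_ncard_ne_zero (by rw [hCcard]; omega)
    refine ⟨{A}, by simpa using hA, Finset.card_singleton A, ?_⟩
    have hIcc : Finset.Icc 1 (1 - 1) = (∅ : Finset ℕ) := by simp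
    rw [hIcc, Finset.prod_empty, mul_one]
    have hle : (uncovF C {A}).card ≤ (Mset C).toFinset.card :=
      Finset.card_le_card (Finset.filter_subset _ _)
    have := Mset_card_le hq hCcard
    have : (uncovF C {A}).card ≤ q ^ 2 := le_trans hle this
    exact_mod_cast this
  | succ j hj ih =>
    intro hjw
    obtain ⟨K, hKC, hKcard, hKU⟩ := ih (by omega)
    have hjq : j < q + 1 := by omega
    obtain ⟨A, hAC, hAK, hmono, hcount⟩ := greedy_step hC hq K hKC (by omega)
    refine ⟨insert A K, ?_, ?_, ?_⟩
    · rw [Finset.coe_insert]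
      exact Set.insert_subset hAC hKC
    · rw [Finset.card_insert_of_notMem hAK, hKcard]
    · -- the analytic step
      set U := (uncovF C K).card with hU
      set U' := (uncovF C (insert A K)).card with hU'
      set d : ℝ := (q : ℝ) + 1 - j with hd
      have hdpos : 0 < d := by
        rw [hd]
        have : (j : ℝ) ≤ q := by exact_mod_cast Nat.le_of_lt_succ hjq
        linarith
      set fj : ℝ := 1 - ((j : ℝ) - 2) / d with hfj
      have hfnonneg : 0 ≤ fj := by
        rw [hfj]
        rcases le_or_gt 3 j with h3 | h3
        · have hnum : (j : ℝ) - 2 < d := by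
            rw [hd]
            have : (2 * j : ℝ) < (q : ℝ) + 3 := by
              have : (2 * j : ℕ) < q + 3 := by omega
              exact_mod_cast this
            linarith
          have := (div_lt_one hdpos).mpr hnum
          linarith
        · have hnum : (j : ℝ) - 2 ≤ 0 := by
            have : (j : ℝ) ≤ 2 := by exact_mod_cast Nat.lt_succ_iff.mp h3
            linarith
          have := div_nonpos_iff.mpr (Or.inr ⟨hnum, le_of_lt hdpos⟩)
          linarith
      have hUU' : U' ≤ U := by rw [hU, hU']; exact hmono
      have hUfj : (U' : ℝ) ≤ (U : ℝ) * fj := by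
        rcases le_or_gt 3 j with h3 | h3
        · rw [hKcard] at hcount
          have hc1 : ((j : ℝ) - 2) * (U : ℝ) ≤ d * ((U : ℝ) - (U' : ℝ)) := by
            have := hcount
            have hcast : ((j - 2 : ℕ) : ℝ) * (U : ℝ) ≤ ((q + 1 - j : ℕ) : ℝ) *
                (((U - U' : ℕ)) : ℝ) := by exact_mod_cast this
            rw [Nat.cast_sub (by omega : 2 ≤ j), Nat.cast_sub (by omega : j ≤ q + 1),
              Nat.cast_sub hUU'] at hcast
            rw [hd]
            push_cast at hcast ⊢
            nlinarith [hcast]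
          have hexp : ((U : ℝ) * fj) * d = (U : ℝ) * d - ((j : ℝ) - 2) * (U : ℝ) := by
            rw [hfj]
            field_simp
          have key : (U' : ℝ) * d ≤ ((U : ℝ) * fj) * d := by
            rw [hexp]
            nlinarith [hc1]
          exact le_of_mul_le_mul_right key hdpos
        · have h1 : (U' : ℝ) ≤ (U : ℝ) := by exact_mod_cast hUU'
          have hnum : (j : ℝ) - 2 ≤ 0 := by
            have : (j : ℝ) ≤ 2 := by exact_mod_cast Nat.lt_succ_iff.mp h3
            linarith
          have hge1 : 1 ≤ fj := by
            rw [hfj]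
            have := div_nonpos_iff.mpr (Or.inr ⟨hnum, le_of_lt hdpos⟩)
            linarith
          nlinarith [Nat.cast_nonneg (α := ℝ) U]
      have hstep : Finset.Icc 1 (j + 1 - 1) = Finset.Icc 1 j := by simp
      rw [hstep]
      obtain ⟨b, rfl⟩ : ∃ b, j = b + 1 := ⟨j - 1, by omega⟩
      rw [Finset.prod_Icc_succ_top (by omega : 1 ≤ b + 1)]
      have hIH : ((U : ℝ)) ≤ (q : ℝ) ^ 2 * ∏ i ∈ Finset.Icc 1 b,
          (1 - ((i : ℝ) - 2) / ((q : ℝ) + 1 - i)) := by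
        have : Finset.Icc 1 (b + 1 - 1) = Finset.Icc 1 b := by simp
        rw [this] at hKU
        exact hKU
      have hfeq : fj = 1 - (((b + 1 : ℕ) : ℝ) - 2) / ((q : ℝ) + 1 - ((b + 1 : ℕ) : ℝ)) := by
        rw [hfj, hd]
      calc (U' : ℝ) ≤ (U : ℝ) * fj := hUfj
        _ ≤ ((q : ℝ) ^ 2 * ∏ i ∈ Finset.Icc 1 b,
            (1 - ((i : ℝ) - 2) / ((q : ℝ) + 1 - i))) * fj :=
          mul_le_mul_of_nonneg_right hIH hfnonneg
        _ = _ := by rw [hfeq]; push_cast; ring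

end ACAux

namespace ACAux

open Projectivization Module Submodule QuadraticMap

lemma exists_cover {C : Set (PG2 F)} (hC : IsConic C) {q : ℕ} (hq : Fintype.card F = q)
    (hq5 : 5 ≤ q) {w : ℕ} (hw3 : 3 ≤ w) (hwq : 2 * w < q + 3) :
    ∃ S : Set (PG2 F), S ⊆ C ∧ (∀ P ∈ Mset C, Covered S P) ∧
      (S.ncard : ℝ) ≤ ((w : ℝ) + 1) + (q : ℝ) ^ 2 *
        ∏ i ∈ Finset.Icc 1 w, (1 - ((i : ℝ) - 2) / ((q : ℝ) + 1 - i)) := by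
  classical
  obtain ⟨K, hKC, hKcard, hKU⟩ := greedy hC hq hq5 hwq (w + 1) (by omega) le_rfl
  have hIcc : Finset.Icc 1 (w + 1 - 1) = Finset.Icc 1 w := by simp
  rw [hIcc] at hKU
  set UF := uncovF C K with hUF
  -- patch function
  set pt : PG2 F → PG2 F := fun P =>
    if h : ∃ A, A ∈ C ∧ Covered (insert A (↑K : Set (PG2 F))) P then h.choose else P with hpt
  have hptspec : ∀ P ∈ UF, pt P ∈ C ∧ Covered (insert (pt P) (↑K : Set (PG2 F))) P := by
    intro P hPU
    rw [hUF, uncovF, Finset.mem_filter, Set.mem_toFinset] at hPU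
    have hgc := good_count hC hPU.1 K hKC hPU.2
    have hpos : 0 < ((C.toFinset \ K).filter
        (fun A => Covered (insert A (↑K : Set (PG2 F))) P)).card := by
      rw [hKcard] at hgc
      omega
    obtain ⟨A, hA⟩ := Finset.card_pos.mp hpos
    rw [Finset.mem_filter, Finset.mem_sdiff, Set.mem_toFinset] at hA
    have hex : ∃ A, A ∈ C ∧ Covered (insert A (↑K : Set (PG2 F))) P :=
      ⟨A, hA.1.1, hA.2⟩
    simp only [hpt, dif_pos hex]
    exact hex.choose_spec
  refine ⟨↑K ∪ (pt '' ↑UF), ?_, ?_, ?_⟩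
  · rintro x (hx | ⟨P, hPU, rfl⟩)
    · exact hKC hx
    · exact (hptspec P (by exact_mod_cast hPU)).1
  · intro P hP
    by_cases hcov : Covered (↑K : Set (PG2 F)) P
    · exact Covered_mono Set.subset_union_left hcov
    · have hPU : P ∈ UF := by
        rw [hUF, uncovF, Finset.mem_filter, Set.mem_toFinset]
        exact ⟨hP, hcov⟩
      have h2 := (hptspec P hPU).2
      refine Covered_mono ?_ h2
      intro x hx
      rcases Set.mem_insert_iff.mp hx with rfl | hxK
      · exact Or.inr ⟨P, by exact_mod_cast hPU, rfl⟩
      · exact Or.inl hxK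
  · have h1 : (↑K ∪ (pt '' ↑UF) : Set (PG2 F)).ncard ≤ K.card + UF.card := by
      calc (↑K ∪ (pt '' ↑UF) : Set (PG2 F)).ncard
          ≤ (↑K : Set (PG2 F)).ncard + (pt '' (↑UF : Set (PG2 F))).ncard :=
            Set.ncard_union_le _ _
        _ ≤ K.card + UF.card := by
            gcongr
            · rw [Set.ncard_coe_finset]
            · calc (pt '' (↑UF : Set (PG2 F))).ncard ≤ (↑UF : Set (PG2 F)).ncard :=
                  Set.ncard_image_le (Set.toFinite _)
                _ = UF.card := Set.ncard_coe_finset _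
    calc ((↑K ∪ (pt '' ↑UF) : Set (PG2 F)).ncard : ℝ) ≤ (K.card : ℝ) + (UF.card : ℝ) := by
          exact_mod_cast h1
      _ ≤ ((w : ℝ) + 1) + (q : ℝ) ^ 2 *
          ∏ i ∈ Finset.Icc 1 w, (1 - ((i : ℝ) - 2) / ((q : ℝ) + 1 - i)) := by
          rw [hKcard]
          push_cast
          linarith [hKU]

end ACAux

/-- If `w < (q+3)/2` satisfies the product inequality
`∏_{i=1}^w (1 - (i-2)/(q+1-i)) ≤ ξ/q²`, then `t(q) ≤ w + 1 + ξ`. -/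
theorem tAC_le_of_prod_le (q : ℕ) (hq : Fintype.card F = q) (hq5 : 5 ≤ q)
    (C : Set (PG2 F)) (hC : IsConic C)
    (ξ : ℝ) (hξ : 1 ≤ ξ) (w : ℕ) (hwq : 2 * w < q + 3)
    (hprod : ∏ i ∈ Finset.Icc 1 w, (1 - ((i : ℝ) - 2) / ((q : ℝ) + 1 - i)) ≤ ξ / (q : ℝ) ^ 2) :
    (tAC C : ℝ) ≤ (w : ℝ) + 1 + ξ := by
  classical
  have hq0 : (0 : ℝ) < (q : ℝ) := by exact_mod_cast Nat.pos_of_ne_zero (by omega)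
  by_cases hcase : (q : ℝ) ≤ (w : ℝ) + ξ
  · obtain ⟨S, hS, hScard⟩ := ACAux.trivial_AC hC hq hq5
    have hle : tAC C ≤ q := Nat.sInf_le ⟨S, hS, hScard⟩
    have : (tAC C : ℝ) ≤ (q : ℝ) := by exact_mod_cast hle
    linarith
  · push_neg at hcase
    have hw3 : 3 ≤ w := by
      by_contra hlt
      push_neg at hlt
      have hqne : (q : ℝ) ≠ 0 := ne_of_gt hq0
      have hprodge : (1 : ℝ) ≤ ∏ i ∈ Finset.Icc 1 w,
          (1 - ((i : ℝ) - 2) / ((q : ℝ) + 1 - i)) := by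
        have hpos1 : (0:ℝ) < 1 / (q:ℝ) := by positivity
        interval_cases w
        · simp
        · have he : ∏ i ∈ Finset.Icc (1:ℕ) 1, (1 - ((i : ℝ) - 2) / ((q : ℝ) + 1 - i))
              = 1 + 1 / (q:ℝ) := by
            rw [Finset.Icc_self, Finset.prod_singleton]
            push_cast
            field_simp
            ring_nf
            field_simp
            ring
          rw [he]
          linarith
        · have he : ∏ i ∈ Finset.Icc (1:ℕ) 2, (1 - ((i : ℝ) - 2) / ((q : ℝ) + 1 - i))
              = 1 + 1 / (q:ℝ) := by
            rw [show Finset.Icc (1:ℕ) 2 = {1, 2} by decide]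
            rw [Finset.prod_insert (by decide), Finset.prod_singleton]
            have hq1 : (q:ℝ) + 1 - (2:ℕ) ≠ 0 := by
              push_cast
              have : (5:ℝ) ≤ (q:ℝ) := by exact_mod_cast hq5
              linarith
            push_cast at hq1 ⊢
            field_simp
            ring_nf
            field_simp
            ring
          rw [he]
          linarith
      have hq2 : (q : ℝ) ^ 2 ≤ ξ := by
        have h := le_trans hprodge hprod
        rw [le_div_iff₀ (by positivity)] at h
        linarith [h]
      have : (q : ℝ) ≤ (q : ℝ) ^ 2 := by nlinarith
      have hwnn : (0 : ℝ) ≤ (w : ℝ) := Nat.cast_nonneg w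
      linarith
    obtain ⟨S, hSC, hScov, hScard⟩ := ACAux.exists_cover hC hq hq5 hw3 hwq
    have hbound : (S.ncard : ℝ) ≤ (w : ℝ) + 1 + ξ := by
      have h2 : (q : ℝ) ^ 2 * ∏ i ∈ Finset.Icc 1 w,
          (1 - ((i : ℝ) - 2) / ((q : ℝ) + 1 - i)) ≤ ξ := by
        have := mul_le_mul_of_nonneg_left hprod (by positivity : (0:ℝ) ≤ (q : ℝ) ^ 2)
        rw [mul_div_cancel₀] at this
        · exact this
        · positivity
      linarith [hScard]
    have hproper : S ⊂ C := by
      refine ⟨hSC, fun hEq => ?_⟩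
      have hSeq : S = C := Set.Subset.antisymm hSC hEq
      have : (S.ncard : ℝ) = (q : ℝ) + 1 := by
        rw [hSeq, hC.2.2, hq]; push_cast; ring
      rw [this] at hbound
      linarith
    have hmem : S.ncard ∈ {n : ℕ | ∃ S' : Set (PG2 F), IsACSubset C S' ∧ S'.ncard = n} :=
      ⟨S, ⟨hproper, hScov⟩, rfl⟩
    have hle : tAC C ≤ S.ncard := Nat.sInf_le hmem
    have : (tAC C : ℝ) ≤ (S.ncard : ℝ) := by exact_mod_cast hle
    linarith
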